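/- Composing the diagonal scaling, zero-padding, circulant embedding, and DFT diagonalization yields correctness of the DVM–vector product algorithm: for any x ∈ ℂ^N, D̂_N · Jᵀ · F_M* · D̆_M · F_M · J · D̂_N · x = Ã_N x, where Ã_N[k,l] = α^{kl}, under the hypotheses of the DVM factorization (β² = α, M = 2N, D̆_M = diag(√M F_M c) with c the circulant first column). -/

import Mathlib

open Complex
set_option maxHeartbeats 1000000

theorem geom_aux (M : ℕ) (hM : 0 < M) (t : ℤ) :
    ∑ m : Fin M, Complex.exp (-2 * Real.pi * I / M) ^ ((m:ℤ) * t)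
      = if (M:ℤ) ∣ t then (M:ℂ) else 0 := by
  set ω := Complex.exp (-2 * Real.pi * I / M) with hωdef
  have hprim : IsPrimitiveRoot ω M := by
    have h := Complex.isPrimitiveRoot_exp M hM.ne'
    have harg : (-2 * (Real.pi:ℂ) * I / M) = -(2 * Real.pi * I / M) := by ring
    rw [hωdef, harg, Complex.exp_neg]
    exact h.inv
  have h1 : ∀ m : Fin M, ω ^ ((m:ℤ) * t) = (ω ^ t) ^ (m:ℕ) := by
    intro m; rw [mul_comm, zpow_mul, zpow_natCast]
  simp only [h1]
  rw [Fin.sum_univ_eq_sum_range (fun i => (ω ^ t) ^ i)]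
  by_cases h : (M:ℤ) ∣ t
  · rw [(hprim.zpow_eq_one_iff_dvd t).mpr h, if_pos h]
    simp
  · have hne : ω ^ t ≠ 1 := fun hh => h ((hprim.zpow_eq_one_iff_dvd t).mp hh)
    rw [geom_sum_eq hne]
    have hpow : (ω ^ t) ^ M = 1 := by
      rw [← zpow_natCast, ← zpow_mul, mul_comm, zpow_mul, zpow_natCast, hprim.pow_eq_one, one_zpow]
    rw [hpow]
    simp [h]

/-- Correctness of the DVM–vector product algorithm: for every `x ∈ ℂ^N`,
applying in turn the diagonal scaling `D̂_N`, zero-padding `J`, DFT `F_M`,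
diagonal `D̆_M = diag(√M F_M c)`, inverse DFT `F_M*`, truncation `Jᵀ`, and
scaling `D̂_N` produces `Ã_N x`, where `Ã_N[k,l] = α^{kl}`, `β² = α`, `M = 2N`. -/
theorem dvm_mulVec_algorithm_correct (N : ℕ) (hN : 1 ≤ N) (α β : ℂ) (hα : α ≠ 0)
    (hβ : β ^ 2 = α)
    (A : Matrix (Fin N) (Fin N) ℂ)
    (hA : ∀ k l : Fin N, A k l = α ^ ((k : ℤ) * (l : ℤ)))
    (F : Matrix (Fin (2 * N)) (Fin (2 * N)) ℂ)
    (hF : ∀ k l : Fin (2 * N), F k l =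
      (1 / (Real.sqrt (2 * N) : ℂ)) *
        Complex.exp (-2 * Real.pi * I / (2 * N)) ^ ((k : ℕ) * (l : ℕ)))
    (c : Fin (2 * N) → ℂ)
    (hc₁ : ∀ m : Fin (2 * N), (m : ℕ) < N → c m = β ^ (-(m : ℤ) ^ 2))
    (hc₂ : ∀ m : Fin (2 * N), (m : ℕ) = N → c m = 1)
    (hc₃ : ∀ m : Fin (2 * N), N < (m : ℕ) → c m = β ^ (-(2 * (N : ℤ) - (m : ℤ)) ^ 2))
    (J : Matrix (Fin (2 * N)) (Fin N) ℂ)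
    (hJ : ∀ k l, J k l = if (k : ℕ) = (l : ℕ) then 1 else 0)
    (Dhat : Matrix (Fin N) (Fin N) ℂ)
    (hDhat : Dhat = Matrix.diagonal fun k : Fin N => β ^ ((k : ℤ) ^ 2))
    (Dbreve : Matrix (Fin (2 * N)) (Fin (2 * N)) ℂ)
    (hDbreve : Dbreve = Matrix.diagonal
      fun l : Fin (2 * N) => (Real.sqrt (2 * N) : ℂ) * (F.mulVec c) l) :
    ∀ x : Fin N → ℂ,
      Dhat.mulVec (J.transpose.mulVec (F.conjTranspose.mulVec
        (Dbreve.mulVec (F.mulVec (J.mulVec (Dhat.mulVec x)))))) = A.mulVec x := by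
  -- basic nonvanishing facts
  have hβ0 : β ≠ 0 := by
    intro h; exact hα (by rw [← hβ, h]; norm_num)
  have hM : 0 < 2 * N := by omega
  set s : ℂ := ((Real.sqrt (2 * N) : ℝ) : ℂ) with hsdef
  have hs0 : s ≠ 0 := by
    rw [hsdef]
    norm_cast
    positivity
  have hss : s * s = 2 * (N:ℂ) := by
    rw [hsdef]
    norm_cast
    rw [Real.mul_self_sqrt (by positivity)]
  have hN0 : (2 * (N:ℂ)) ≠ 0 := by
    simp; omega
  set ω : ℂ := Complex.exp (-2 * Real.pi * I / (2 * N)) with hωdef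
  have hω0 : ω ≠ 0 := Complex.exp_ne_zero _
  have hcast : ((2*N : ℕ) : ℂ) = 2 * (N:ℂ) := by push_cast; ring
  have hgeom : ∀ t : ℤ, ∑ m : Fin (2*N), ω ^ ((m:ℤ) * t)
      = if ((2*N:ℕ):ℤ) ∣ t then 2 * (N:ℂ) else 0 := by
    intro t
    have h := geom_aux (2*N) hM t
    rw [hcast] at h
    exact h
  have hconjω : (starRingEnd ℂ) ω = ω⁻¹ := by
    rw [← Complex.exp_conj, ← Complex.exp_neg]
    congr 1
    simp [map_div₀, Complex.conj_I, map_ofNat]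
    push_cast
    ring
  -- conjugate of F entry
  have hFconj : ∀ m a : Fin (2*N),
      (starRingEnd ℂ) (F m a) = (1/s) * ω ^ (-(((m:ℕ) * (a:ℕ) : ℕ) : ℤ)) := by
    intro m a
    rw [hF, map_mul, map_pow, hconjω, inv_pow, ← zpow_natCast, ← zpow_neg]
    congr 1
    rw [map_div₀, map_one, hsdef, Complex.conj_ofReal]
  -- the central entry computation
  have hkey : ∀ a b m : Fin (2*N),
      (starRingEnd ℂ) (F m a) * ((s * (F.mulVec c) m) * F m b)
        = ∑ j : Fin (2*N), (1 / (2*(N:ℂ))) * c j * ω ^ ((m:ℤ) * ((j:ℤ) + (b:ℤ) - (a:ℤ))) := by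
    intro a b m
    rw [Matrix.mulVec, dotProduct, Finset.mul_sum, Finset.sum_mul, Finset.mul_sum]
    refine Finset.sum_congr rfl fun j _ => ?_
    rw [hFconj, hF, hF]
    have hsplit : ω ^ ((m:ℤ) * ((j:ℤ) + (b:ℤ) - (a:ℤ)))
        = ω ^ (-(((m:ℕ) * (a:ℕ) : ℕ) : ℤ)) * (ω ^ (((m:ℕ) * (j:ℕ) : ℕ) : ℤ) * ω ^ (((m:ℕ) * (b:ℕ) : ℕ) : ℤ)) := by
      rw [← zpow_add₀ hω0, ← zpow_add₀ hω0]
      congr 1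
      push_cast
      ring
    rw [hsplit]
    simp only [zpow_natCast]
    field_simp
    ring_nf
    have h2 : (s⁻¹:ℂ)^2 = ((N:ℂ))⁻¹ * (1/2) := by
      rw [inv_pow, sq, hss, mul_inv]; ring
    have hNc : (N:ℂ) ≠ 0 := by simp; omega
    rw [sq, hss, mul_assoc, mul_assoc, mul_inv_cancel₀ hNc, mul_one]
  -- entry formula for G = Fᴴ * (Dbreve * F)
  have hG : ∀ a b : Fin (2*N), (F.conjTranspose * (Dbreve * F)) a b
      = ∑ j : Fin (2*N), (1/(2*(N:ℂ))) * c j *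
          (if ((2*N:ℕ):ℤ) ∣ ((j:ℤ) + (b:ℤ) - (a:ℤ)) then 2*(N:ℂ) else 0) := by
    intro a b
    rw [hDbreve, Matrix.mul_apply]
    calc ∑ m, F.conjTranspose a m
          * ((Matrix.diagonal (fun l : Fin (2*N) => s * (F.mulVec c) l) * F) m b)
        = ∑ m : Fin (2*N), ∑ j : Fin (2*N),
            (1/(2*(N:ℂ))) * c j * ω ^ ((m:ℤ) * ((j:ℤ)+(b:ℤ)-(a:ℤ))) := by
          refine Finset.sum_congr rfl fun m _ => ?_
          rw [Matrix.diagonal_mul, Matrix.conjTranspose_apply, Complex.star_def, hkey]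
      _ = ∑ j : Fin (2*N), ∑ m : Fin (2*N),
            (1/(2*(N:ℂ))) * c j * ω ^ ((m:ℤ) * ((j:ℤ)+(b:ℤ)-(a:ℤ))) := Finset.sum_comm
      _ = _ := by
          refine Finset.sum_congr rfl fun j _ => ?_
          rw [← Finset.mul_sum, hgeom]
  -- truncation lemmas
  have hJT : ∀ (X : Matrix (Fin (2*N)) (Fin N) ℂ) (k l : Fin N),
      (J.transpose * X) k l = X (Fin.castLE (by omega) k) l := by
    intro X k l
    rw [Matrix.mul_apply, Finset.sum_eq_single (Fin.castLE (by omega : N ≤ 2*N) k)]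
    · rw [Matrix.transpose_apply, hJ]; simp
    · intro b _ hb
      rw [Matrix.transpose_apply, hJ, if_neg, zero_mul]
      intro h; exact hb (Fin.ext (by simpa using h))
    · intro h; exact absurd (Finset.mem_univ _) h
  have hXJ : ∀ (X : Matrix (Fin (2*N)) (Fin (2*N)) ℂ) (a : Fin (2*N)) (l : Fin N),
      (X * J) a l = X a (Fin.castLE (by omega) l) := by
    intro X a l
    rw [Matrix.mul_apply, Finset.sum_eq_single (Fin.castLE (by omega : N ≤ 2*N) l)]
    · rw [hJ]; simp
    · intro b _ hb
      rw [hJ, if_neg, mul_zero]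
      intro h; exact hb (Fin.ext (by simpa using h))
    · intro h; exact absurd (Finset.mem_univ _) h
  intro x
  have hB : Dhat.mulVec (J.transpose.mulVec (F.conjTranspose.mulVec
        (Dbreve.mulVec (F.mulVec (J.mulVec (Dhat.mulVec x))))))
      = (Dhat * ((J.transpose * ((F.conjTranspose * (Dbreve * F)) * J)) * Dhat)).mulVec x := by
    simp only [Matrix.mulVec_mulVec, Matrix.mul_assoc]
  rw [hB]
  suffices h : Dhat * ((J.transpose * ((F.conjTranspose * (Dbreve * F)) * J)) * Dhat) = A by
    rw [h]
  ext k l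
  rw [hA, hDhat, Matrix.diagonal_mul, Matrix.mul_diagonal, hJT, hXJ, hG]
  simp only [Fin.coe_castLE]
  have hk2 := k.2
  have hl2 := l.2
  have huniq : ∀ j : Fin (2*N), ((2*N:ℕ):ℤ) ∣ ((j:ℤ) + (l:ℤ) - (k:ℤ)) →
      ((j:ℕ):ℤ) + (l:ℤ) - (k:ℤ) = 0 ∨ ((j:ℕ):ℤ) + (l:ℤ) - (k:ℤ) = 2*(N:ℤ) := by
    rintro j ⟨q, hq⟩
    have hj2 := j.2
    have h1 : ((j:ℕ):ℤ) + (l:ℤ) - (k:ℤ) < 2*(N:ℤ)*2 := by push_cast; omega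
    have h2 : 2*(N:ℤ)*(-1) < ((j:ℕ):ℤ) + (l:ℤ) - (k:ℤ) := by push_cast; omega
    rw [hq] at h1 h2
    push_cast at hq h1 h2
    have hq1 : q < 2 := lt_of_mul_lt_mul_left h1 (by omega)
    have hq2 : -1 < q := lt_of_mul_lt_mul_left h2 (by omega)
    interval_cases q
    · left; omega
    · right; omega
  have hsum : (∑ j : Fin (2*N), (1/(2*(N:ℂ))) * c j *
      (if ((2*N:ℕ):ℤ) ∣ ((j:ℤ) + (l:ℤ) - (k:ℤ)) then 2*(N:ℂ) else 0))
      = β ^ (-((k:ℤ) - (l:ℤ))^2) := by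
    rcases le_or_gt (l:ℕ) (k:ℕ) with hkl | hkl
    · set j₀ : Fin (2*N) := ⟨(k:ℕ) - (l:ℕ), by omega⟩ with hj₀
      have hval : (j₀:ℕ) = (k:ℕ) - (l:ℕ) := rfl
      rw [Finset.sum_eq_single j₀]
      · have hdvd : ((2*N:ℕ):ℤ) ∣ ((j₀:ℤ) + (l:ℤ) - (k:ℤ)) := by
          have : ((j₀:ℕ):ℤ) + (l:ℤ) - (k:ℤ) = 0 := by rw [hval]; push_cast; omega
          rw [this]; exact dvd_zero _
        rw [if_pos hdvd, hc₁ j₀ (by omega)]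
        have hjz : ((j₀:ℕ):ℤ) = (k:ℤ) - (l:ℤ) := by rw [hval]; push_cast; omega
        rw [hjz]
        rw [mul_comm, ← mul_assoc, mul_one_div, div_self hN0, one_mul]
      · intro j _ hjne
        rw [if_neg, mul_zero]
        intro hdvd
        have hj2 := j.2
        rcases huniq j hdvd with h | h
        · exact hjne (Fin.ext (by rw [hval]; omega))
        · omega
      · intro h; exact absurd (Finset.mem_univ _) h
    · set j₀ : Fin (2*N) := ⟨2*N - ((l:ℕ) - (k:ℕ)), by omega⟩ with hj₀
      have hval : (j₀:ℕ) = 2*N - ((l:ℕ) - (k:ℕ)) := rfl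
      rw [Finset.sum_eq_single j₀]
      · have hdvd : ((2*N:ℕ):ℤ) ∣ ((j₀:ℤ) + (l:ℤ) - (k:ℤ)) := by
          refine ⟨1, ?_⟩
          rw [show ((j₀:ℕ):ℤ) = 2*(N:ℤ) - ((l:ℤ) - (k:ℤ)) from by rw [hval]; push_cast; omega]
          push_cast; ring
        rw [if_pos hdvd, hc₃ j₀ (by rw [hval]; omega)]
        have hjz : 2*(N:ℤ) - ((j₀:ℕ):ℤ) = (l:ℤ) - (k:ℤ) := by rw [hval]; push_cast; omega
        rw [hjz, show (-((l:ℤ) - (k:ℤ))^2) = (-((k:ℤ) - (l:ℤ))^2) from by ring]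
        rw [mul_comm, ← mul_assoc, mul_one_div, div_self hN0, one_mul]
      · intro j _ hjne
        rw [if_neg, mul_zero]
        intro hdvd
        have hj2 := j.2
        rcases huniq j hdvd with h | h
        · omega
        · exact hjne (Fin.ext (by rw [hval]; omega))
      · intro h; exact absurd (Finset.mem_univ _) h
  rw [hsum]
  rw [show β ^ ((k:ℤ)^2) * (β ^ (-((k:ℤ)-(l:ℤ))^2) * β ^ ((l:ℤ)^2))
      = β ^ ((k:ℤ)^2 + (-((k:ℤ)-(l:ℤ))^2 + (l:ℤ)^2)) from by
    rw [zpow_add₀ hβ0, zpow_add₀ hβ0]]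
  rw [show ((k:ℤ)^2 + (-((k:ℤ)-(l:ℤ))^2 + (l:ℤ)^2)) = 2*((k:ℤ)*(l:ℤ)) from by ring]
  rw [zpow_mul, show ((2:ℤ)) = ((2:ℕ):ℤ) from rfl, zpow_natCast, hβ]
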